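/- Let (E,ℰ) be a measurable space and let (P_μ)_{μ∈𝒫(E)} be a nonlinear Markov chain satisfying: (B1) sup_{μ,ν∈𝒫(E), x,y∈E} ‖P_μ(x,·) − P_ν(y,·)‖_TV ≤ 2(1−α) for some 0 < α < 1, and (B2) ‖P_μ(x,·) − P_ν(x,·)‖_TV ≤ λ‖μ − ν‖_TV for all x ∈ E and μ,ν ∈ 𝒫(E), with λ ∈ [0,α]. Then the chain has a unique invariant measure π, and for every initial distribution μ₀: if λ < α then ‖μ_n − π‖_TV ≤ 2(1−(α−λ))^n for all n ∈ ℤ₊, while if λ = α then ‖μ_n − π‖_TV ≤ 2/(λn) for all n ≥ 1. -/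

import Mathlib

open MeasureTheory ProbabilityTheory

/-- Total variation distance `‖μ − ν‖_TV = 2 sup_{A ∈ ℰ} |μ(A) − ν(A)|`. -/
noncomputable def tvDist {E : Type*} [MeasurableSpace E] (μ ν : Measure E) : ℝ :=
  2 * ⨆ A : {s : Set E // MeasurableSet s}, |(μ A).toReal - (ν A).toReal|

/-- One step of the nonlinear chain: `μ ↦ μ P_μ`, `(νP_μ)(B) = ∫ P_μ(x,B) ν(dx)`. -/
noncomputable def stepMeasure {E : Type*} [MeasurableSpace E]
    (P : Measure E → Kernel E E) (μ : Measure E) : Measure E :=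
  μ.bind (fun x => P μ x)

/-- Two-step transition kernel `Q_μ(x,B) = ∫ P_μ(x,dy) P_{μP_μ}(y,B)`. -/
noncomputable def twoStepKernel {E : Type*} [MeasurableSpace E]
    (P : Measure E → Kernel E E) (μ : Measure E) (x : E) : Measure E :=
  (P μ x).bind (fun y => P (stepMeasure P μ) y)

/-- Marginal distributions `μ_{n+1} = μ_n P_{μ_n}` of the nonlinear Markov chain. -/
noncomputable def marginal {E : Type*} [MeasurableSpace E]
    (P : Measure E → Kernel E E) (μ0 : Measure E) : ℕ → Measure E
  | 0 => μ0
  | n + 1 => stepMeasure P (marginal P μ0 n)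

namespace ButkovskyAux

variable {E : Type*} [MeasurableSpace E]

instance : Nonempty {s : Set E // MeasurableSet s} := ⟨⟨∅, MeasurableSet.empty⟩⟩

lemma toReal_prob_le_one (μ : Measure E) [IsProbabilityMeasure μ] (A : Set E) :
    (μ A).toReal ≤ 1 := by
  have h : μ A ≤ 1 := prob_le_one
  simpa using ENNReal.toReal_mono (by norm_num) h

lemma abs_term_le_one (μ ν : Measure E) [IsProbabilityMeasure μ] [IsProbabilityMeasure ν]
    (A : Set E) : |(μ A).toReal - (ν A).toReal| ≤ 1 := by
  rw [abs_sub_le_iff]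
  constructor <;>
    [linarith [toReal_prob_le_one μ A, ENNReal.toReal_nonneg (a := ν A)];
     linarith [toReal_prob_le_one ν A, ENNReal.toReal_nonneg (a := μ A)]]

lemma tv_bdd (μ ν : Measure E) [IsProbabilityMeasure μ] [IsProbabilityMeasure ν] :
    BddAbove (Set.range fun A : {s : Set E // MeasurableSet s} =>
      |(μ A).toReal - (ν A).toReal|) := by
  refine ⟨1, ?_⟩
  rintro x ⟨A, rfl⟩
  exact abs_term_le_one μ ν A

lemma abs_sub_le_tv_half (μ ν : Measure E) [IsProbabilityMeasure μ] [IsProbabilityMeasure ν]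
    {A : Set E} (hA : MeasurableSet A) :
    |(μ A).toReal - (ν A).toReal| ≤ tvDist μ ν / 2 := by
  have := le_ciSup (tv_bdd μ ν) (⟨A, hA⟩ : {s : Set E // MeasurableSet s})
  rw [tvDist] at *
  linarith

lemma tv_nonneg (μ ν : Measure E) [IsProbabilityMeasure μ] [IsProbabilityMeasure ν] :
    0 ≤ tvDist μ ν := by
  have := abs_sub_le_tv_half μ ν MeasurableSet.empty
  have h0 : (0:ℝ) ≤ |(μ (∅:Set E)).toReal - (ν (∅:Set E)).toReal| := abs_nonneg _
  linarith

lemma tv_le_of_forall (μ ν : Measure E) {c : ℝ}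
    (h : ∀ A : Set E, MeasurableSet A → |(μ A).toReal - (ν A).toReal| ≤ c) :
    tvDist μ ν ≤ 2 * c := by
  rw [tvDist]
  have : ⨆ A : {s : Set E // MeasurableSet s}, |(μ A).toReal - (ν A).toReal| ≤ c :=
    ciSup_le fun A => h A A.2
  linarith

lemma tv_le_two (μ ν : Measure E) [IsProbabilityMeasure μ] [IsProbabilityMeasure ν] :
    tvDist μ ν ≤ 2 := by
  have := tv_le_of_forall μ ν (fun A _ => abs_term_le_one μ ν A)
  linarith

lemma tv_comm (μ ν : Measure E) : tvDist μ ν = tvDist ν μ := by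
  rw [tvDist, tvDist]
  congr 1
  exact congrArg _ (funext fun A => abs_sub_comm _ _)

lemma tv_triangle (μ ν ρ : Measure E) [IsProbabilityMeasure μ] [IsProbabilityMeasure ν]
    [IsProbabilityMeasure ρ] : tvDist μ ρ ≤ tvDist μ ν + tvDist ν ρ := by
  have h := tv_le_of_forall μ ρ (c := (tvDist μ ν + tvDist ν ρ) / 2) (fun A hA => by
    have h1 := abs_sub_le_tv_half μ ν hA
    have h2 := abs_sub_le_tv_half ν ρ hA
    have := abs_sub_le ((μ A).toReal) ((ν A).toReal) ((ρ A).toReal)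
    linarith)
  linarith

lemma eq_of_tv_le_zero (μ ν : Measure E) [IsProbabilityMeasure μ] [IsProbabilityMeasure ν]
    (h : tvDist μ ν ≤ 0) : μ = ν := by
  refine Measure.ext fun A hA => ?_
  have h1 := abs_sub_le_tv_half μ ν hA
  have h2 : |(μ A).toReal - (ν A).toReal| = 0 :=
    le_antisymm (by linarith) (abs_nonneg _)
  have h3 : (μ A).toReal = (ν A).toReal := by
    have := abs_eq_zero.mp h2; linarith
  exact (ENNReal.toReal_eq_toReal_iff' (measure_ne_top μ A) (measure_ne_top ν A)).mp h3

end ButkovskyAux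
namespace ButkovskyAux

variable {E : Type*} [MeasurableSpace E]

lemma isProb_step (P : Measure E → Kernel E E) (hP : ∀ μ, IsMarkovKernel (P μ))
    (μ : Measure E) [IsProbabilityMeasure μ] : IsProbabilityMeasure (stepMeasure P μ) := by
  haveI := hP μ
  constructor
  rw [stepMeasure, Measure.bind_apply MeasurableSet.univ (Kernel.measurable (P μ)).aemeasurable]
  simp [measure_univ]

lemma isProb_marginal (P : Measure E → Kernel E E) (hP : ∀ μ, IsMarkovKernel (P μ))
    (μ0 : Measure E) [IsProbabilityMeasure μ0] (n : ℕ) :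
    IsProbabilityMeasure (marginal P μ0 n) := by
  induction n with
  | zero => simpa [marginal] using inferInstanceAs (IsProbabilityMeasure μ0)
  | succ n ih => exact @isProb_step E _ P hP (marginal P μ0 n) ih

lemma marginal_marginal (P : Measure E → Kernel E E) (μ0 : Measure E) (k : ℕ) :
    ∀ n, marginal P (marginal P μ0 k) n = marginal P μ0 (k + n) := by
  intro n
  induction n with
  | zero => simp [marginal]
  | succ n ih =>
      have h : k + (n + 1) = (k + n) + 1 := rfl
      rw [h]
      show stepMeasure P (marginal P (marginal P μ0 k) n) = stepMeasure P (marginal P μ0 (k + n))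
      rw [ih]

/-- Bound for the difference of integrals against two measures of equal total mass `t`,
when `f x - g y ≤ c` for all `x, y`. -/
lemma pair_bound (ρ σ : Measure E) [IsFiniteMeasure ρ] [IsFiniteMeasure σ]
    (f g : E → ℝ) (hfi : Integrable f ρ) (hgi : Integrable g σ) (t c : ℝ)
    (htρ : (ρ Set.univ).toReal = t) (htσ : (σ Set.univ).toReal = t)
    (hb : ∀ x y, f x - g y ≤ c) :
    ∫ x, f x ∂ρ - ∫ x, g x ∂σ ≤ c * t := by
  have ht0 : 0 ≤ t := htρ ▸ ENNReal.toReal_nonneg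
  rcases eq_or_lt_of_le ht0 with h0 | hpos
  · have hρ : ρ = 0 := by
      refine Measure.measure_univ_eq_zero.mp ?_
      have : (ρ Set.univ).toReal = 0 := by rw [htρ, ← h0]
      exact (ENNReal.toReal_eq_zero_iff _).mp this |>.resolve_right (measure_ne_top ρ _)
    have hσ : σ = 0 := by
      refine Measure.measure_univ_eq_zero.mp ?_
      have : (σ Set.univ).toReal = 0 := by rw [htσ, ← h0]
      exact (ENNReal.toReal_eq_zero_iff _).mp this |>.resolve_right (measure_ne_top σ _)
    simp [hρ, hσ, ← h0]
  · have h1 : ∀ y, ∫ x, f x ∂ρ ≤ (g y + c) * t := by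
      intro y
      calc ∫ x, f x ∂ρ ≤ ∫ _, (g y + c) ∂ρ :=
            integral_mono hfi (integrable_const _) (fun x => by linarith [hb x y])
        _ = (g y + c) * t := by rw [integral_const, Measure.real, htρ, smul_eq_mul, mul_comm]
    have h2 : ∀ y, (∫ x, f x ∂ρ) / t - c ≤ g y := by
      intro y
      have := h1 y
      rw [div_sub' (ne_of_gt hpos), div_le_iff₀ hpos]
      linarith
    have h3 : ((∫ x, f x ∂ρ) / t - c) * t ≤ ∫ x, g x ∂σ := by
      calc ((∫ x, f x ∂ρ) / t - c) * t = ∫ _, ((∫ x, f x ∂ρ) / t - c) ∂σ := by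
            rw [integral_const, Measure.real, htσ, smul_eq_mul, mul_comm]
        _ ≤ ∫ y, g y ∂σ := integral_mono (integrable_const _) hgi (fun y => h2 y)
    have h4 : ((∫ x, f x ∂ρ) / t - c) * t = ∫ x, f x ∂ρ - c * t := by
      field_simp
    rw [h4] at h3
    linarith

end ButkovskyAux
namespace ButkovskyAux

variable {E : Type*} [MeasurableSpace E]

lemma key_contraction (P : Measure E → Kernel E E) (hP : ∀ μ, IsMarkovKernel (P μ))
    (α lam : ℝ)
    (B1 : ∀ (μ ν : Measure E), IsProbabilityMeasure μ → IsProbabilityMeasure ν →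
      ∀ x y : E, tvDist (P μ x) (P ν y) ≤ 2 * (1 - α))
    (B2 : ∀ (μ ν : Measure E), IsProbabilityMeasure μ → IsProbabilityMeasure ν →
      ∀ x : E, tvDist (P μ x) (P ν x) ≤ lam * tvDist μ ν)
    (μ ν : Measure E) (hμ : IsProbabilityMeasure μ) (hν : IsProbabilityMeasure ν) :
    tvDist (stepMeasure P μ) (stepMeasure P ν)
      ≤ (1 - α + lam) * tvDist μ ν - lam / 2 * tvDist μ ν ^ 2 := by
  haveI := hμ; haveI := hν
  obtain ⟨S, hS, hSpos, hSneg⟩ := hahn_decomposition (μ := μ) (ν := ν)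
  set t : ℝ := (μ S).toReal - (ν S).toReal with htdef
  clear_value t
  have hcompl : ∀ (κ : Measure E), IsProbabilityMeasure κ →
      (κ S).toReal + (κ Sᶜ).toReal = 1 := by
    intro κ hκ
    have h := measure_add_measure_compl (μ := κ) hS
    rw [measure_univ] at h
    have h2 : (κ S + κ Sᶜ).toReal = 1 := by rw [h]; simp
    rwa [ENNReal.toReal_add (measure_ne_top _ _) (measure_ne_top _ _)] at h2
  have hsplit : ∀ (κ : Measure E), IsFiniteMeasure κ → ∀ (A B : Set E), MeasurableSet B →
      (κ A).toReal = (κ (A ∩ B)).toReal + (κ (A \ B)).toReal := by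
    intro κ hκ A B hB
    haveI := hκ
    rw [← measure_inter_add_diff A hB,
      ENNReal.toReal_add (measure_ne_top _ _) (measure_ne_top _ _)]
  have ht0 : 0 ≤ t := htdef ▸
    sub_nonneg.mpr (ENNReal.toReal_mono (measure_ne_top μ S) (hSpos S hS subset_rfl))
  have hbound1 : ∀ A : Set E, MeasurableSet A → (μ A).toReal - (ν A).toReal ≤ t := by
    intro A hA
    have e1 := hsplit μ inferInstance A S hS
    have e2 := hsplit ν inferInstance A S hS
    have e3 := hsplit μ inferInstance S A hA
    have e4 := hsplit ν inferInstance S A hA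
    rw [Set.inter_comm S A] at e3 e4
    have r1 : (ν (S \ A)).toReal ≤ (μ (S \ A)).toReal :=
      ENNReal.toReal_mono (measure_ne_top _ _) (hSpos _ (hS.diff hA) Set.diff_subset)
    have r2 : (μ (A \ S)).toReal ≤ (ν (A \ S)).toReal :=
      ENNReal.toReal_mono (measure_ne_top _ _) (hSneg _ (hA.diff hS) (fun x hx => hx.2))
    rw [htdef]
    linarith
  have hbound2 : ∀ A : Set E, MeasurableSet A → (ν A).toReal - (μ A).toReal ≤ t := by
    intro A hA
    have e1 := hsplit ν inferInstance A Sᶜ hS.compl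
    have e2 := hsplit μ inferInstance A Sᶜ hS.compl
    have e3 := hsplit ν inferInstance Sᶜ A hA
    have e4 := hsplit μ inferInstance Sᶜ A hA
    rw [Set.inter_comm Sᶜ A] at e3 e4
    have r1 : (μ (Sᶜ \ A)).toReal ≤ (ν (Sᶜ \ A)).toReal :=
      ENNReal.toReal_mono (measure_ne_top _ _) (hSneg _ (hS.compl.diff hA) Set.diff_subset)
    have r2 : (ν (A \ Sᶜ)).toReal ≤ (μ (A \ Sᶜ)).toReal :=
      ENNReal.toReal_mono (measure_ne_top _ _)
        (hSpos _ (hA.diff hS.compl) (fun x hx => Set.notMem_compl_iff.mp hx.2))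
    have c1 := hcompl μ hμ
    have c2 := hcompl ν hν
    rw [htdef]
    linarith
  have hD : tvDist μ ν = 2 * t := by
    have hsup : (⨆ A : {s : Set E // MeasurableSet s},
        |(μ A).toReal - (ν A).toReal|) = t := by
      apply le_antisymm
      · exact ciSup_le fun A => abs_le.mpr ⟨by linarith [hbound2 A A.2], hbound1 A A.2⟩
      · have h := le_ciSup (tv_bdd μ ν) (⟨S, hS⟩ : {s : Set E // MeasurableSet s})
        calc t ≤ |(μ S).toReal - (ν S).toReal| := htdef ▸ le_abs_self _
          _ ≤ _ := h
    rw [tvDist, hsup]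
  -- the three pieces of the decomposition
  have hle1 : ν.restrict S ≤ μ.restrict S := by
    refine Measure.le_iff.mpr fun A hA => ?_
    rw [Measure.restrict_apply hA, Measure.restrict_apply hA]
    exact hSpos _ (hA.inter hS) Set.inter_subset_right
  have hle2 : μ.restrict Sᶜ ≤ ν.restrict Sᶜ := by
    refine Measure.le_iff.mpr fun A hA => ?_
    rw [Measure.restrict_apply hA, Measure.restrict_apply hA]
    exact hSneg _ (hA.inter hS.compl) Set.inter_subset_right
  set γ : Measure E := ν.restrict S + μ.restrict Sᶜ with hγdef
  set ρp : Measure E := μ.restrict S - ν.restrict S with hρpdef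
  set ρm : Measure E := ν.restrict Sᶜ - μ.restrict Sᶜ with hρmdef
  haveI : IsFiniteMeasure γ := by rw [hγdef]; infer_instance
  haveI : IsFiniteMeasure ρp := by rw [hρpdef]; infer_instance
  haveI : IsFiniteMeasure ρm := by rw [hρmdef]; infer_instance
  have hμdec : ρp + γ = μ := by
    have h1 : ρp + ν.restrict S = μ.restrict S := Measure.sub_add_cancel_of_le hle1
    calc ρp + γ = (ρp + ν.restrict S) + μ.restrict Sᶜ := by rw [hγdef, add_assoc]
      _ = μ.restrict S + μ.restrict Sᶜ := by rw [h1]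
      _ = μ := Measure.restrict_add_restrict_compl hS
  have hνdec : ρm + γ = ν := by
    have h2 : ρm + μ.restrict Sᶜ = ν.restrict Sᶜ := Measure.sub_add_cancel_of_le hle2
    calc ρm + γ = ν.restrict S + (ρm + μ.restrict Sᶜ) := by rw [hγdef, add_left_comm]
      _ = ν.restrict S + ν.restrict Sᶜ := by rw [h2]
      _ = ν := Measure.restrict_add_restrict_compl hS
  have hρp_mass : (ρp Set.univ).toReal = t := by
    rw [hρpdef, Measure.sub_apply MeasurableSet.univ hle1, Measure.restrict_apply_univ,
      Measure.restrict_apply_univ,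
      ENNReal.toReal_sub_of_le (hSpos S hS subset_rfl) (measure_ne_top _ _)]
    exact htdef.symm
  have hρm_mass : (ρm Set.univ).toReal = t := by
    rw [hρmdef, Measure.sub_apply MeasurableSet.univ hle2, Measure.restrict_apply_univ,
      Measure.restrict_apply_univ,
      ENNReal.toReal_sub_of_le (hSneg Sᶜ hS.compl subset_rfl) (measure_ne_top _ _)]
    have c1 := hcompl μ hμ
    have c2 := hcompl ν hν
    rw [htdef]
    linarith
  have hγ_mass : (γ Set.univ).toReal = 1 - t := by
    rw [hγdef, Measure.add_apply, Measure.restrict_apply_univ, Measure.restrict_apply_univ,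
      ENNReal.toReal_add (measure_ne_top _ _) (measure_ne_top _ _)]
    have c1 := hcompl μ hμ
    rw [htdef]
    linarith
  -- per-set bound for the step measures
  have main : ∀ B : Set E, MeasurableSet B →
      |((stepMeasure P μ) B).toReal - ((stepMeasure P ν) B).toReal|
        ≤ (1 - α) * t + lam * t * (1 - t) := by
    intro B hB
    haveI := hP μ; haveI := hP ν
    set f : E → ℝ := fun x => ((P μ) x B).toReal with hfdef
    set g : E → ℝ := fun x => ((P ν) x B).toReal with hgdef
    have hfm : Measurable f := ((P μ).measurable_coe hB).ennreal_toReal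
    have hgm : Measurable g := ((P ν).measurable_coe hB).ennreal_toReal
    have hf01 : ∀ x, 0 ≤ f x ∧ f x ≤ 1 := fun x =>
      ⟨ENNReal.toReal_nonneg, toReal_prob_le_one ((P μ) x) B⟩
    have hg01 : ∀ x, 0 ≤ g x ∧ g x ≤ 1 := fun x =>
      ⟨ENNReal.toReal_nonneg, toReal_prob_le_one ((P ν) x) B⟩
    have intf : ∀ (κ : Measure E) [IsFiniteMeasure κ], Integrable f κ := fun κ _ =>
      (integrable_const (1:ℝ)).mono' hfm.aestronglyMeasurable (ae_of_all _ fun x => by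
        rw [Real.norm_eq_abs, abs_of_nonneg (hf01 x).1]; exact (hf01 x).2)
    have intg : ∀ (κ : Measure E) [IsFiniteMeasure κ], Integrable g κ := fun κ _ =>
      (integrable_const (1:ℝ)).mono' hgm.aestronglyMeasurable (ae_of_all _ fun x => by
        rw [Real.norm_eq_abs, abs_of_nonneg (hg01 x).1]; exact (hg01 x).2)
    have hstepμ : ((stepMeasure P μ) B).toReal = ∫ x, f x ∂μ := by
      rw [stepMeasure, Measure.bind_apply hB (Kernel.measurable (P μ)).aemeasurable,
        ← integral_toReal ((P μ).measurable_coe hB).aemeasurable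
          (ae_of_all _ fun x => measure_lt_top _ _)]
    have hstepν : ((stepMeasure P ν) B).toReal = ∫ x, g x ∂ν := by
      rw [stepMeasure, Measure.bind_apply hB (Kernel.measurable (P ν)).aemeasurable,
        ← integral_toReal ((P ν).measurable_coe hB).aemeasurable
          (ae_of_all _ fun x => measure_lt_top _ _)]
    have hIμ : ∫ x, f x ∂μ = ∫ x, f x ∂ρp + ∫ x, f x ∂γ := by
      conv_lhs => rw [← hμdec]
      rw [integral_add_measure (intf ρp) (intf γ)]
    have hIν : ∫ x, g x ∂ν = ∫ x, g x ∂ρm + ∫ x, g x ∂γ := by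
      conv_lhs => rw [← hνdec]
      rw [integral_add_measure (intg ρm) (intg γ)]
    have hmid : |∫ x, f x ∂γ - ∫ x, g x ∂γ| ≤ lam * t * (1 - t) := by
      have hfg : ∀ x, |f x - g x| ≤ lam * t := by
        intro x
        have h1 := abs_sub_le_tv_half ((P μ) x) ((P ν) x) hB
        have h2 := B2 μ ν hμ hν x
        rw [hD] at h2
        calc |f x - g x| ≤ tvDist ((P μ) x) ((P ν) x) / 2 := h1
          _ ≤ lam * t := by nlinarith
      rw [← integral_sub (intf γ) (intg γ)]
      calc |∫ x, (f x - g x) ∂γ| ≤ ∫ x, |f x - g x| ∂γ := by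
            simpa [Real.norm_eq_abs] using
              norm_integral_le_integral_norm (μ := γ) (f := fun x => f x - g x)
        _ ≤ ∫ _, lam * t ∂γ :=
            integral_mono ((intf γ).sub (intg γ)).abs (integrable_const _) hfg
        _ = lam * t * (1 - t) := by rw [integral_const, Measure.real, hγ_mass, smul_eq_mul, mul_comm]
    have hfg' : ∀ x y, f x - g y ≤ 1 - α := by
      intro x y
      have h1 := abs_sub_le_tv_half ((P μ) x) ((P ν) y) hB
      have h2 := B1 μ ν hμ hν x y
      have h3 := le_abs_self (f x - g y)
      linarith
    have hgf' : ∀ x y, g x - f y ≤ 1 - α := by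
      intro x y
      have h1 := abs_sub_le_tv_half ((P ν) x) ((P μ) y) hB
      have h2 := B1 ν μ hν hμ x y
      have h3 := le_abs_self (g x - f y)
      linarith
    have hp1 : ∫ x, f x ∂ρp - ∫ x, g x ∂ρm ≤ (1 - α) * t :=
      pair_bound ρp ρm f g (intf ρp) (intg ρm) t (1 - α) hρp_mass hρm_mass hfg'
    have hp2 : ∫ x, g x ∂ρm - ∫ x, f x ∂ρp ≤ (1 - α) * t :=
      pair_bound ρm ρp g f (intg ρm) (intf ρp) t (1 - α) hρm_mass hρp_mass hgf'
    have hmid' := abs_le.mp hmid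
    rw [hstepμ, hstepν, hIμ, hIν]
    rw [abs_le]
    constructor <;> [linarith [hmid'.1, hp2]; linarith [hmid'.2, hp1]]
  have hfin := tv_le_of_forall (stepMeasure P μ) (stepMeasure P ν) main
  calc tvDist (stepMeasure P μ) (stepMeasure P ν)
      ≤ 2 * ((1 - α) * t + lam * t * (1 - t)) := hfin
    _ = (1 - α + lam) * (2 * t) - lam / 2 * (2 * t) ^ 2 := by ring
    _ = (1 - α + lam) * tvDist μ ν - lam / 2 * tvDist μ ν ^ 2 := by rw [hD]

end ButkovskyAux
namespace ButkovskyAux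

variable {E : Type*} [MeasurableSpace E]

lemma exists_limit (μs : ℕ → Measure E) (hprob : ∀ n, IsProbabilityMeasure (μs n))
    (c : ℕ → ℝ) (hc0 : Filter.Tendsto c Filter.atTop (nhds 0))
    (hcau : ∀ n m, n ≤ m → tvDist (μs n) (μs m) ≤ c n) :
    ∃ π : Measure E, IsProbabilityMeasure π ∧ ∀ n, tvDist (μs n) π ≤ c n := by
  haveI := hprob
  have hcnn : ∀ n, 0 ≤ c n := fun n => le_trans (tv_nonneg (μs n) (μs n)) (hcau n n le_rfl)
  set a : Set E → ℕ → ℝ := fun A n => ((μs n) A).toReal with hadef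
  have habs : ∀ (A : Set E), MeasurableSet A → ∀ n m, n ≤ m → |a A n - a A m| ≤ c n / 2 :=
    fun A hA n m hnm =>
      le_trans (abs_sub_le_tv_half (μs n) (μs m) hA) (by linarith [hcau n m hnm])
  have hcauchy : ∀ (A : Set E), MeasurableSet A → CauchySeq (a A) := by
    intro A hA
    rw [Metric.cauchySeq_iff']
    intro ε hε
    obtain ⟨N, hN⟩ := (Metric.tendsto_atTop.mp hc0) ε hε
    refine ⟨N, fun n hn => ?_⟩
    have h1 := habs A hA N n hn
    have h2 := hN N le_rfl
    rw [Real.dist_eq, sub_zero, abs_of_nonneg (hcnn N)] at h2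
    rw [Real.dist_eq, abs_sub_comm]
    calc |a A N - a A n| ≤ c N / 2 := h1
      _ < ε := by linarith
  set L : Set E → ℝ := fun A => Filter.limUnder Filter.atTop (a A) with hLdef
  have hL : ∀ A : Set E, MeasurableSet A →
      Filter.Tendsto (a A) Filter.atTop (nhds (L A)) := by
    intro A hA
    obtain ⟨x, hx⟩ := cauchySeq_tendsto_of_complete (hcauchy A hA)
    have : L A = x := hx.limUnder_eq
    rwa [this]
  have hL0 : ∀ A, MeasurableSet A → 0 ≤ L A := fun A hA =>
    ge_of_tendsto' (hL A hA) (fun n => ENNReal.toReal_nonneg)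
  have hL1 : ∀ A, MeasurableSet A → L A ≤ 1 := fun A hA =>
    le_of_tendsto' (hL A hA) (fun n => toReal_prob_le_one (μs n) A)
  have hLapprox : ∀ A, MeasurableSet A → ∀ n, |a A n - L A| ≤ c n / 2 := by
    intro A hA n
    have h1 : Filter.Tendsto (fun m => |a A n - a A m|) Filter.atTop
        (nhds |a A n - L A|) := (tendsto_const_nhds.sub (hL A hA)).abs
    exact le_of_tendsto h1 (Filter.eventually_atTop.mpr ⟨n, fun m hm => habs A hA n m hm⟩)
  have hLadd : ∀ A B : Set E, MeasurableSet A → MeasurableSet B → Disjoint A B →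
      L (A ∪ B) = L A + L B := by
    intro A B hA hB hdisj
    have h1 : ∀ n, a (A ∪ B) n = a A n + a B n := by
      intro n
      show ((μs n) (A ∪ B)).toReal = ((μs n) A).toReal + ((μs n) B).toReal
      rw [measure_union hdisj hB, ENNReal.toReal_add (measure_ne_top _ _) (measure_ne_top _ _)]
    have h2 : Filter.Tendsto (a (A ∪ B)) Filter.atTop (nhds (L A + L B)) :=
      Filter.Tendsto.congr (fun n => (h1 n).symm) ((hL A hA).add (hL B hB))
    exact tendsto_nhds_unique (hL (A ∪ B) (hA.union hB)) h2
  have hLuniv : L Set.univ = 1 := by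
    have h1 : ∀ n, a Set.univ n = 1 := fun n => by
      show ((μs n) Set.univ).toReal = 1
      rw [measure_univ]; simp
    exact tendsto_nhds_unique (hL _ MeasurableSet.univ)
      (Filter.Tendsto.congr (fun n => (h1 n).symm) tendsto_const_nhds)
  have hLempty : L ∅ = 0 := by
    have h1 : ∀ n, a (∅ : Set E) n = 0 := fun n => by
      show ((μs n) ∅).toReal = 0
      simp
    exact tendsto_nhds_unique (hL _ MeasurableSet.empty)
      (Filter.Tendsto.congr (fun n => (h1 n).symm) tendsto_const_nhds)
  have hadd : ∀ (f : ℕ → Set E), (∀ i, MeasurableSet (f i)) → Pairwise (Function.onFun Disjoint f) →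
      ENNReal.ofReal (L (⋃ i, f i)) = ∑' i, ENNReal.ofReal (L (f i)) := by
    intro f hf hdisj
    set U : ℕ → Set E := fun k => ⋃ i ∈ Finset.range k, f i with hUdef
    have hUmeas : ∀ k, MeasurableSet (U k) := fun k =>
      MeasurableSet.biUnion (Finset.range k).countable_toSet (fun i _ => hf i)
    have hUsub : ∀ k, U k ⊆ ⋃ i, f i := fun k =>
      Set.iUnion₂_subset fun i _ => Set.subset_iUnion f i
    have hUsum : ∀ k, L (U k) = ∑ i ∈ Finset.range k, L (f i) := by
      intro k
      induction k with
      | zero => simpa [hUdef] using hLempty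
      | succ k ih =>
        have hsetk : U (k + 1) = U k ∪ f k := by
          show (⋃ i ∈ Finset.range (k + 1), f i) = (⋃ i ∈ Finset.range k, f i) ∪ f k
          rw [Finset.range_add_one, Finset.set_biUnion_insert]
          exact Set.union_comm _ _
        have hdk : Disjoint (U k) (f k) := by
          rw [Set.disjoint_left]
          intro x hx hxk
          obtain ⟨i, hi, hxi⟩ := Set.mem_iUnion₂.mp hx
          exact Set.disjoint_left.mp (hdisj (Finset.mem_range.mp hi).ne) hxi hxk
        rw [hsetk, hLadd _ _ (hUmeas k) (hf k) hdk, ih, Finset.sum_range_succ]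
    have hTmeas : ∀ k, MeasurableSet ((⋃ i, f i) \ U k) := fun k =>
      (MeasurableSet.iUnion hf).diff (hUmeas k)
    have hLsplit : ∀ k, L (⋃ i, f i) = L (U k) + L ((⋃ i, f i) \ U k) := by
      intro k
      rw [← hLadd _ _ (hUmeas k) (hTmeas k) Set.disjoint_sdiff_right,
        Set.union_diff_cancel (hUsub k)]
    have htail : Filter.Tendsto (fun k => L ((⋃ i, f i) \ U k)) Filter.atTop (nhds 0) := by
      rw [Metric.tendsto_atTop]
      intro ε hε
      obtain ⟨N, hN⟩ := (Metric.tendsto_atTop.mp hc0) ε hε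
      have hcN : c N < ε := by
        have := hN N le_rfl; rwa [Real.dist_eq, sub_zero, abs_of_nonneg (hcnn N)] at this
      have hmono : Monotone U := fun k l hkl =>
        Set.biUnion_subset_biUnion_left (Finset.range_subset_range.mpr hkl)
      have hμU : Filter.Tendsto (fun k => (μs N) (U k)) Filter.atTop
          (nhds ((μs N) (⋃ k, U k))) := tendsto_measure_iUnion_atTop hmono
      have hUeq : (⋃ k, U k) = ⋃ i, f i := by
        apply Set.Subset.antisymm (Set.iUnion_subset hUsub)
        intro x hx
        obtain ⟨i, hi⟩ := Set.mem_iUnion.mp hx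
        exact Set.mem_iUnion.mpr ⟨i + 1, Set.mem_biUnion (Finset.self_mem_range_succ i) hi⟩
      rw [hUeq] at hμU
      have hdiff : ∀ k, a ((⋃ i, f i) \ U k) N = a (⋃ i, f i) N - a (U k) N := by
        intro k
        have hd := measure_diff (hUsub k) (hUmeas k).nullMeasurableSet
          (measure_ne_top (μs N) _)
        show ((μs N) _).toReal = ((μs N) _).toReal - ((μs N) _).toReal
        rw [hd, ENNReal.toReal_sub_of_le (measure_mono (hUsub k)) (measure_ne_top _ _)]
      have htR : Filter.Tendsto (fun k => a (U k) N) Filter.atTop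
          (nhds (a (⋃ i, f i) N)) :=
        (ENNReal.tendsto_toReal (measure_ne_top (μs N) _)).comp hμU
      have h5 : Filter.Tendsto (fun k => a (⋃ i, f i) N - a (U k) N) Filter.atTop
          (nhds 0) := by
        simpa using (tendsto_const_nhds (x := a (⋃ i, f i) N)).sub htR
      obtain ⟨K, hK⟩ := (Metric.tendsto_atTop.mp h5) (ε - c N / 2) (by linarith)
      refine ⟨K, fun k hk => ?_⟩
      have h6 := hK k hk
      rw [Real.dist_eq, sub_zero] at h6
      have h7 := abs_le.mp (hLapprox _ (hTmeas k) N)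
      have h8 := hL0 _ (hTmeas k)
      rw [Real.dist_eq, sub_zero, abs_of_nonneg h8]
      have h10 : a ((⋃ i, f i) \ U k) N ≤ |a (⋃ i, f i) N - a (U k) N| := by
        rw [hdiff k]; exact le_abs_self _
      linarith [h6, h7.1, h7.2, h10]
    have hsum_tendsto : Filter.Tendsto (fun k => ∑ i ∈ Finset.range k, L (f i))
        Filter.atTop (nhds (L (⋃ i, f i))) := by
      have heq : ∀ k, ∑ i ∈ Finset.range k, L (f i)
          = L (⋃ i, f i) - L ((⋃ i, f i) \ U k) := by
        intro k
        have := hLsplit k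
        rw [← hUsum k]
        linarith
      refine Filter.Tendsto.congr (fun k => (heq k).symm) ?_
      simpa using tendsto_const_nhds.sub htail
    have hsummable : Summable (fun i => L (f i)) := by
      apply summable_of_sum_range_le (c := L (⋃ i, f i)) (fun i => hL0 _ (hf i))
      intro k
      have h1 := hLsplit k
      have h2 := hL0 _ (hTmeas k)
      rw [← hUsum k]
      linarith
    have htsum : ∑' i, L (f i) = L (⋃ i, f i) :=
      tendsto_nhds_unique hsummable.hasSum.tendsto_sum_nat hsum_tendsto
    rw [← htsum, ENNReal.ofReal_tsum_of_nonneg (fun i => hL0 _ (hf i)) hsummable]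
  set π : Measure E := Measure.ofMeasurable (fun s _ => ENNReal.ofReal (L s))
      (by simp [hLempty]) hadd with hπdef
  have hπ_apply : ∀ A, MeasurableSet A → π A = ENNReal.ofReal (L A) := fun A hA =>
    Measure.ofMeasurable_apply A hA
  have hπprob : IsProbabilityMeasure π :=
    ⟨by rw [hπ_apply _ MeasurableSet.univ, hLuniv, ENNReal.ofReal_one]⟩
  refine ⟨π, hπprob, fun n => ?_⟩
  have h := tv_le_of_forall (μs n) π (c := c n / 2) (fun A hA => by
    rw [hπ_apply A hA, ENNReal.toReal_ofReal (hL0 A hA)]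
    exact hLapprox A hA n)
  linarith

end ButkovskyAux
namespace ButkovskyAux

variable {E : Type*} [MeasurableSpace E]

lemma seq_bound (lam : ℝ) (hl : 0 < lam) (hl1 : lam < 1) (d : ℕ → ℝ)
    (h0 : ∀ n, 0 ≤ d n) (h2 : d 0 ≤ 2)
    (hrec : ∀ n, d (n + 1) ≤ d n - lam / 2 * d n ^ 2) :
    ∀ n : ℕ, 1 ≤ n → d n ≤ 2 / (lam * n) := by
  have hmono : Antitone d := antitone_nat_of_succ_le fun n =>
    le_trans (hrec n) (by nlinarith [sq_nonneg (d n)])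
  have hub : ∀ n, d n ≤ 2 := fun n => le_trans (hmono (Nat.zero_le n)) h2
  intro n hn
  by_contra hcon
  push_neg at hcon
  have hn1 : (1:ℝ) ≤ (n:ℝ) := by exact_mod_cast hn
  have hnpos : (0:ℝ) < (n:ℝ) := by linarith
  have hdnpos : 0 < d n := lt_of_le_of_lt (le_of_lt (div_pos two_pos (mul_pos hl hnpos))) hcon
  have hpos : ∀ k, k ≤ n → 0 < d k := fun k hk => lt_of_lt_of_le hdnpos (hmono hk)
  have hinv : ∀ k, k ≤ n → (k : ℝ) * (lam / 2) ≤ 1 / d k := by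
    intro k
    induction k with
    | zero =>
        intro _
        have hd0 := hpos 0 (Nat.zero_le n)
        simpa using le_of_lt (one_div_pos.mpr hd0)
    | succ k ih =>
      intro hk
      have hk' : k ≤ n := Nat.le_of_succ_le hk
      have ihk := ih hk'
      have hdk := hpos k hk'
      have hdk1 := hpos (k + 1) hk
      have h2p : (0:ℝ) ≤ 2 + lam * d k :=
        add_nonneg (by norm_num) (mul_nonneg hl.le hdk.le)
      have hmul := mul_le_mul_of_nonneg_right (hrec k) h2p
      have hb : d (k + 1) * (2 + lam * d k) ≤ 2 * d k := by
        nlinarith [hmul, mul_nonneg (mul_nonneg hl.le hl.le)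
          (mul_nonneg (mul_nonneg hdk.le hdk.le) hdk.le)]
      have h1 : 1 / d k + lam / 2 ≤ 1 / d (k + 1) := by
        rw [le_div_iff₀ hdk1]
        have he : (1 / d k + lam / 2) * d (k + 1)
            = d (k + 1) * (2 + lam * d k) / (2 * d k) := by
          field_simp
        rw [he, div_le_one (by positivity)]
        linarith
      push_cast
      linarith
  have hfin := hinv n le_rfl
  have hm1 : d n * ((n:ℝ) * (lam / 2)) ≤ d n * (1 / d n) :=
    mul_le_mul_of_nonneg_left hfin (h0 n)
  rw [mul_one_div, div_self (ne_of_gt hdnpos)] at hm1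
  have hm2 : 2 / (lam * n) * ((n:ℝ) * (lam / 2)) < d n * ((n:ℝ) * (lam / 2)) :=
    mul_lt_mul_of_pos_right hcon (by positivity)
  have he2 : 2 / (lam * n) * ((n:ℝ) * (lam / 2)) = 1 := by
    field_simp
  linarith

lemma traj_lt (P : Measure E → Kernel E E) (hP : ∀ μ, IsMarkovKernel (P μ))
    (α lam : ℝ) (hα1 : α < 1) (hlam0 : 0 ≤ lam)
    (B1 : ∀ (μ ν : Measure E), IsProbabilityMeasure μ → IsProbabilityMeasure ν →
      ∀ x y : E, tvDist (P μ x) (P ν y) ≤ 2 * (1 - α))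
    (B2 : ∀ (μ ν : Measure E), IsProbabilityMeasure μ → IsProbabilityMeasure ν →
      ∀ x : E, tvDist (P μ x) (P ν x) ≤ lam * tvDist μ ν)
    (μ0 ν0 : Measure E) (hμ0 : IsProbabilityMeasure μ0) (hν0 : IsProbabilityMeasure ν0) :
    ∀ n : ℕ, tvDist (marginal P μ0 n) (marginal P ν0 n) ≤ 2 * (1 - (α - lam)) ^ n := by
  haveI := hμ0; haveI := hν0
  intro n
  induction n with
  | zero =>
      simpa [marginal] using tv_le_two μ0 ν0
  | succ n ih =>
      have hμn := isProb_marginal P hP μ0 n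
      have hνn := isProb_marginal P hP ν0 n
      haveI := hμn; haveI := hνn
      have hk := key_contraction P hP α lam B1 B2 _ _ hμn hνn
      have htv0 := tv_nonneg (marginal P μ0 n) (marginal P ν0 n)
      have hfac : (0:ℝ) ≤ 1 - α + lam := by linarith
      calc tvDist (marginal P μ0 (n + 1)) (marginal P ν0 (n + 1))
          = tvDist (stepMeasure P (marginal P μ0 n)) (stepMeasure P (marginal P ν0 n)) := rfl
        _ ≤ (1 - α + lam) * tvDist (marginal P μ0 n) (marginal P ν0 n)
              - lam / 2 * tvDist (marginal P μ0 n) (marginal P ν0 n) ^ 2 := hk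
        _ ≤ (1 - α + lam) * (2 * (1 - (α - lam)) ^ n) := by
              nlinarith [sq_nonneg (tvDist (marginal P μ0 n) (marginal P ν0 n)),
                mul_le_mul_of_nonneg_left ih hfac]
        _ = 2 * (1 - (α - lam)) ^ (n + 1) := by ring
  
lemma traj_eq (P : Measure E → Kernel E E) (hP : ∀ μ, IsMarkovKernel (P μ))
    (α lam : ℝ) (hα0 : 0 < α) (hα1 : α < 1) (heq : lam = α)
    (B1 : ∀ (μ ν : Measure E), IsProbabilityMeasure μ → IsProbabilityMeasure ν →
      ∀ x y : E, tvDist (P μ x) (P ν y) ≤ 2 * (1 - α))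
    (B2 : ∀ (μ ν : Measure E), IsProbabilityMeasure μ → IsProbabilityMeasure ν →
      ∀ x : E, tvDist (P μ x) (P ν x) ≤ lam * tvDist μ ν)
    (μ0 ν0 : Measure E) (hμ0 : IsProbabilityMeasure μ0) (hν0 : IsProbabilityMeasure ν0) :
    ∀ n : ℕ, 1 ≤ n → tvDist (marginal P μ0 n) (marginal P ν0 n) ≤ 2 / (lam * n) := by
  haveI := hμ0; haveI := hν0
  apply seq_bound lam (heq ▸ hα0) (heq ▸ hα1)
  · intro n
    haveI := isProb_marginal P hP μ0 n
    haveI := isProb_marginal P hP ν0 n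
    exact tv_nonneg _ _
  · simpa [marginal] using tv_le_two μ0 ν0
  · intro n
    have hμn := isProb_marginal P hP μ0 n
    have hνn := isProb_marginal P hP ν0 n
    have hk := key_contraction P hP α lam B1 B2 _ _ hμn hνn
    calc tvDist (marginal P μ0 (n + 1)) (marginal P ν0 (n + 1))
        = tvDist (stepMeasure P (marginal P μ0 n)) (stepMeasure P (marginal P ν0 n)) := rfl
      _ ≤ (1 - α + lam) * tvDist (marginal P μ0 n) (marginal P ν0 n)
            - lam / 2 * tvDist (marginal P μ0 n) (marginal P ν0 n) ^ 2 := hk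
      _ = tvDist (marginal P μ0 n) (marginal P ν0 n)
            - lam / 2 * tvDist (marginal P μ0 n) (marginal P ν0 n) ^ 2 := by
            rw [heq]; ring

end ButkovskyAux
open ButkovskyAux in
/-- Butkovsky's one-step result: under
(B1) `sup ‖P_μ(x,·) − P_ν(y,·)‖_TV ≤ 2(1−α)` with `0 < α < 1` and
(B2) `‖P_μ(x,·) − P_ν(x,·)‖_TV ≤ λ‖μ − ν‖_TV` with `λ ∈ [0,α]`, the chain has a unique
invariant measure `π`; if `λ < α` then `‖μ_n − π‖_TV ≤ 2(1−(α−λ))^n`, and if `λ = α`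
then `‖μ_n − π‖_TV ≤ 2/(λn)` for `n ≥ 1`. -/
theorem butkovsky_one_step
    {E : Type*} [MeasurableSpace E] [Nonempty E]
    (P : Measure E → Kernel E E) (hP : ∀ μ, IsMarkovKernel (P μ))
    (α lam : ℝ) (hα0 : 0 < α) (hα1 : α < 1) (hlam0 : 0 ≤ lam) (hlamα : lam ≤ α)
    (B1 : ∀ (μ ν : Measure E), IsProbabilityMeasure μ → IsProbabilityMeasure ν →
      ∀ x y : E, tvDist (P μ x) (P ν y) ≤ 2 * (1 - α))
    (B2 : ∀ (μ ν : Measure E), IsProbabilityMeasure μ → IsProbabilityMeasure ν →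
      ∀ x : E, tvDist (P μ x) (P ν x) ≤ lam * tvDist μ ν) :
    ∃ π : Measure E, IsProbabilityMeasure π ∧ stepMeasure P π = π ∧
      (∀ π' : Measure E, IsProbabilityMeasure π' → stepMeasure P π' = π' → π' = π) ∧
      (∀ μ0 : Measure E, IsProbabilityMeasure μ0 →
        (lam < α → ∀ n : ℕ,
          tvDist (marginal P μ0 n) π ≤ 2 * (1 - (α - lam)) ^ n) ∧
        (lam = α → ∀ n : ℕ, 1 ≤ n →
          tvDist (marginal P μ0 n) π ≤ 2 / (lam * n))) := by
  classical
  set B : ℕ → ℝ := fun n => if lam < α then 2 * (1 - (α - lam)) ^ n else 2 / (lam * n)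
    with hBdef
  have htraj : ∀ (μ0 ν0 : Measure E), IsProbabilityMeasure μ0 → IsProbabilityMeasure ν0 →
      ∀ n : ℕ, 1 ≤ n → tvDist (marginal P μ0 n) (marginal P ν0 n) ≤ B n := by
    intro μ0 ν0 h1 h2 n hn
    by_cases hlt : lam < α
    · simp only [hBdef, if_pos hlt]
      exact traj_lt P hP α lam hα1 hlam0 B1 B2 μ0 ν0 h1 h2 n
    · have heqa : lam = α := le_antisymm hlamα (not_lt.mp hlt)
      simp only [hBdef, if_neg hlt]
      exact traj_eq P hP α lam hα0 hα1 heqa B1 B2 μ0 ν0 h1 h2 n hn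
  have hBtendsto : Filter.Tendsto B Filter.atTop (nhds 0) := by
    by_cases hlt : lam < α
    · have hq0 : (0:ℝ) ≤ 1 - (α - lam) := by linarith
      have hq1 : 1 - (α - lam) < 1 := by linarith
      have h := (tendsto_pow_atTop_nhds_zero_of_lt_one hq0 hq1).const_mul (2:ℝ)
      simp only [hBdef, if_pos hlt]
      simpa using h
    · have hl0 : 0 < lam := lt_of_lt_of_le hα0 (not_lt.mp hlt)
      have h1 := tendsto_one_div_atTop_nhds_zero_nat.const_mul (2 / lam)
      simp only [hBdef, if_neg hlt]
      refine Filter.Tendsto.congr (fun n => ?_) (by simpa using h1)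
      rw [← div_div, div_eq_mul_inv, div_eq_mul_inv]
  have x0 : E := Classical.arbitrary E
  have hμsprob : ∀ n, IsProbabilityMeasure (marginal P (Measure.dirac x0) n) := fun n =>
    isProb_marginal P hP (Measure.dirac x0) n
  set c : ℕ → ℝ := fun n => if n = 0 then 2 else B n with hcdef
  have hc0 : Filter.Tendsto c Filter.atTop (nhds 0) := by
    refine hBtendsto.congr' ?_
    filter_upwards [Filter.eventually_ge_atTop 1] with n hn
    simp only [hcdef, if_neg (Nat.one_le_iff_ne_zero.mp hn)]
  have hcau : ∀ n m, n ≤ m → tvDist (marginal P (Measure.dirac x0) n)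
      (marginal P (Measure.dirac x0) m) ≤ c n := by
    intro n m hnm
    haveI := hμsprob n; haveI := hμsprob m
    by_cases hn0 : n = 0
    · subst hn0
      simp only [hcdef, if_pos rfl]
      exact tv_le_two _ _
    · simp only [hcdef, if_neg hn0]
      have hmn : (m - n) + n = m := by omega
      have hm := marginal_marginal P (Measure.dirac x0) (m - n) n
      rw [hmn] at hm
      rw [← hm]
      exact htraj (Measure.dirac x0) (marginal P (Measure.dirac x0) (m - n))
        inferInstance (isProb_marginal P hP _ _) n (Nat.one_le_iff_ne_zero.mpr hn0)
  obtain ⟨π, hπprob, hπc⟩ :=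
    exists_limit (fun n => marginal P (Measure.dirac x0) n) hμsprob c hc0 hcau
  haveI := hπprob
  have hnonexp : ∀ (μ ν : Measure E), IsProbabilityMeasure μ → IsProbabilityMeasure ν →
      tvDist (stepMeasure P μ) (stepMeasure P ν) ≤ tvDist μ ν := by
    intro μ ν hμ hν
    haveI := hμ; haveI := hν
    have hk := key_contraction P hP α lam B1 B2 μ ν hμ hν
    have h1 := tv_nonneg μ ν
    nlinarith [sq_nonneg (tvDist μ ν), mul_nonneg (sub_nonneg.mpr hlamα) h1,
      mul_nonneg hlam0 (sq_nonneg (tvDist μ ν))]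
  have hπinv : stepMeasure P π = π := by
    haveI hsp := isProb_step P hP π
    apply eq_of_tv_le_zero
    have hb : ∀ n, tvDist (stepMeasure P π) π ≤ c n + c (n + 1) := by
      intro n
      haveI := hμsprob n; haveI := hμsprob (n + 1)
      have t1 : tvDist (stepMeasure P π) (marginal P (Measure.dirac x0) (n + 1))
          ≤ tvDist π (marginal P (Measure.dirac x0) n) := by
        have hms : marginal P (Measure.dirac x0) (n + 1)
            = stepMeasure P (marginal P (Measure.dirac x0) n) := rfl
        rw [hms]
        exact hnonexp π (marginal P (Measure.dirac x0) n) hπprob (hμsprob n)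
      have t2 := tv_triangle (stepMeasure P π) (marginal P (Measure.dirac x0) (n + 1)) π
      have t3 := hπc (n + 1)
      have t4 : tvDist π (marginal P (Measure.dirac x0) n)
          = tvDist (marginal P (Measure.dirac x0) n) π :=
        tv_comm π (marginal P (Measure.dirac x0) n)
      have t5 := hπc n
      linarith
    have hlim : Filter.Tendsto (fun n => c n + c (n + 1)) Filter.atTop (nhds 0) := by
      have h2 := hc0.comp (Filter.tendsto_add_atTop_nat 1)
      simpa using hc0.add h2
    exact ge_of_tendsto hlim (Filter.Eventually.of_forall hb)
  have hmarg_inv : ∀ (ρ : Measure E), stepMeasure P ρ = ρ → ∀ n, marginal P ρ n = ρ := by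
    intro ρ hρ n
    induction n with
    | zero => rfl
    | succ n ih => show stepMeasure P (marginal P ρ n) = ρ; rw [ih, hρ]
  refine ⟨π, hπprob, hπinv, ?_, ?_⟩
  · intro π' hπ' hπ'inv
    haveI := hπ'
    apply eq_of_tv_le_zero
    have hb : ∀ᶠ n in Filter.atTop, tvDist π' π ≤ B n := by
      filter_upwards [Filter.eventually_ge_atTop 1] with n hn
      have h1 := htraj π' π hπ' hπprob n hn
      rwa [hmarg_inv π' hπ'inv n, hmarg_inv π hπinv n] at h1
    exact ge_of_tendsto hBtendsto hb
  · intro μ0 hμ0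
    haveI := hμ0
    constructor
    · intro hlt n
      have h1 := traj_lt P hP α lam hα1 hlam0 B1 B2 μ0 π hμ0 hπprob n
      rwa [hmarg_inv π hπinv n] at h1
    · intro heqa n hn
      have h1 := traj_eq P hP α lam hα0 hα1 heqa B1 B2 μ0 π hμ0 hπprob n hn
      rwa [hmarg_inv π hπinv n] at h1
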